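/- Under the Gaussian linear model, the partial variance s_j² = Var(Y | X_{-j}) satisfies s_j² = σ^{jj} / (σ^{jj}σ^{yy} − (σ^{jy})²) = β_j²/d_{jj} + σ_ε², where Σ^{-1}=(σ^{ij}) is the inverse of the joint covariance matrix of (Y, X_1,…,X_p) and D=(d_{ij}) is the precision matrix of the covariates. -/

import Mathlib

open Matrix

/-- Under the Gaussian linear model, the partial variance
`s_j² = Var(Y | X_{-j}) = σ^{jj} / (σ^{jj}σ^{yy} − (σ^{jy})²)` equals `β_j²/d_{jj} + σε²`,
where `(σ^{ij})` is the inverse of the joint covariance matrix `Sig` of `(Y, X_1, …, X_p)`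
and `D = C⁻¹` is the precision matrix of the covariates. -/
theorem stmt1 (p : ℕ) (C : Matrix (Fin p) (Fin p) ℝ) (hC : C.PosDef)
    (β : Fin p → ℝ) (σε : ℝ) (hσ : 0 < σε)
    (Sig : Matrix (Unit ⊕ Fin p) (Unit ⊕ Fin p) ℝ)
    (hSig : Sig = Matrix.fromBlocks
      (Matrix.of fun _ _ => β ⬝ᵥ (C *ᵥ β) + σε ^ 2)
      (Matrix.of fun _ j => (C *ᵥ β) j)
      (Matrix.of fun j _ => (C *ᵥ β) j) C) :
    ∀ j : Fin p,
      Sig⁻¹ (Sum.inr j) (Sum.inr j) /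
          (Sig⁻¹ (Sum.inr j) (Sum.inr j) * Sig⁻¹ (Sum.inl ()) (Sum.inl ()) -
            (Sig⁻¹ (Sum.inr j) (Sum.inl ())) ^ 2)
        = (β j) ^ 2 / C⁻¹ j j + σε ^ 2 := by
  intro j
  have hσ0 : σε ≠ 0 := ne_of_gt hσ
  have hσ2 : σε ^ 2 ≠ 0 := pow_ne_zero _ hσ0
  have hCdet : IsUnit C.det := hC.det_pos.ne'.isUnit
  have hCsymm : Cᵀ = C := hC.1
  have hCC : C * C⁻¹ = 1 := Matrix.mul_nonsing_inv C hCdet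
  have hCC' : C⁻¹ * C = 1 := Matrix.nonsing_inv_mul C hCdet
  have hdiag : 0 < C⁻¹ j j := by
    have h := hC.inv.dotProduct_mulVec_pos (x := Pi.single j 1) (by
      intro h
      have := congrFun h j
      simp at this)
    simpa [dotProduct, mulVec, Pi.single_apply, Finset.sum_ite_eq, Finset.sum_ite_eq'] using h
  have hd0 : C⁻¹ j j ≠ 0 := ne_of_gt hdiag
  have key : ∀ k, ∑ m, (C *ᵥ β) m * C⁻¹ m k = β k := by
    intro k
    have h1 : (C⁻¹)ᵀ *ᵥ (C *ᵥ β) = β := by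
      rw [Matrix.transpose_nonsing_inv, hCsymm, Matrix.mulVec_mulVec, hCC', Matrix.one_mulVec]
    have h2 := congrFun h1 k
    rw [Matrix.mulVec] at h2
    simp only [dotProduct, Matrix.transpose_apply] at h2
    rw [← h2]
    exact Finset.sum_congr rfl fun m _ => mul_comm _ _
  have hmul : Sig * (Matrix.fromBlocks (Matrix.of fun _ _ => (σε ^ 2)⁻¹)
      (Matrix.of fun _ k => -β k / σε ^ 2)
      (Matrix.of fun k _ => -β k / σε ^ 2)
      (C⁻¹ + Matrix.of fun i k => β i * β k / σε ^ 2)) = 1 := by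
    subst hSig
    ext i k
    rcases i with i | i <;> rcases k with k | k <;>
      simp only [Matrix.mul_apply, Fintype.sum_sum_type, Finset.univ_unique,
        Finset.sum_singleton, Matrix.fromBlocks_apply₁₁, Matrix.fromBlocks_apply₁₂,
        Matrix.fromBlocks_apply₂₁, Matrix.fromBlocks_apply₂₂, Matrix.of_apply,
        Matrix.add_apply, Matrix.one_apply, Sum.inl.injEq, Sum.inr.injEq,
        reduceCtorEq, if_true, if_false]
    · -- (inl, inl)
      have e1 : ∑ m, (C *ᵥ β) m * (-β m / σε ^ 2)
          = (∑ m, β m * (C *ᵥ β) m) * (-(σε ^ 2)⁻¹) := by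
        rw [Finset.sum_mul]
        exact Finset.sum_congr rfl fun m _ => by ring
      rw [e1]
      simp only [dotProduct]
      field_simp
      ring
    · -- (inl, inr k)
      have e1 : ∑ m, (C *ᵥ β) m * (C⁻¹ m k + β m * β k / σε ^ 2)
          = (∑ m, (C *ᵥ β) m * C⁻¹ m k) + (∑ m, β m * (C *ᵥ β) m) * (β k * (σε ^ 2)⁻¹) := by
        have h : ∀ m : Fin p, (C *ᵥ β) m * (C⁻¹ m k + β m * β k / σε ^ 2)
            = (C *ᵥ β) m * C⁻¹ m k + (β m * (C *ᵥ β) m) * (β k * (σε ^ 2)⁻¹) :=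
          fun m => by ring
        rw [Finset.sum_congr rfl fun m _ => h m, Finset.sum_add_distrib, Finset.sum_mul]
      rw [e1, key k]
      simp only [dotProduct]
      field_simp
      ring
    · -- (inr i, inl)
      have e1 : ∑ m, C i m * (-β m / σε ^ 2)
          = (∑ m, C i m * β m) * (-(σε ^ 2)⁻¹) := by
        rw [Finset.sum_mul]
        exact Finset.sum_congr rfl fun m _ => by ring
      rw [e1]
      have e2 : (∑ m, C i m * β m) = (C *ᵥ β) i := rfl
      rw [e2]
      field_simp
      ring
    · -- (inr i, inr k)
      have e1 : ∑ m, C i m * (C⁻¹ m k + β m * β k / σε ^ 2)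
          = (∑ m, C i m * C⁻¹ m k) + (∑ m, C i m * β m) * (β k * (σε ^ 2)⁻¹) := by
        have h : ∀ m : Fin p, C i m * (C⁻¹ m k + β m * β k / σε ^ 2)
            = C i m * C⁻¹ m k + (C i m * β m) * (β k * (σε ^ 2)⁻¹) :=
          fun m => by ring
        rw [Finset.sum_congr rfl fun m _ => h m, Finset.sum_add_distrib, Finset.sum_mul]
      have e2 : (∑ m, C i m * C⁻¹ m k) = (1 : Matrix (Fin p) (Fin p) ℝ) i k := by
        rw [← Matrix.mul_apply, hCC]
      have e3 : (∑ m, C i m * β m) = (C *ᵥ β) i := rfl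
      rw [e1, e2, e3, Matrix.one_apply]
      by_cases h : i = k <;> simp [h] <;> field_simp <;> ring
  have hinv : Sig⁻¹ = Matrix.fromBlocks (Matrix.of fun _ _ => (σε ^ 2)⁻¹)
      (Matrix.of fun _ k => -β k / σε ^ 2)
      (Matrix.of fun k _ => -β k / σε ^ 2)
      (C⁻¹ + Matrix.of fun i k => β i * β k / σε ^ 2) := Matrix.inv_eq_right_inv hmul
  rw [hinv]
  simp only [Matrix.fromBlocks_apply₁₁, Matrix.fromBlocks_apply₂₁,
    Matrix.fromBlocks_apply₂₂, Matrix.add_apply, Matrix.of_apply]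
  have hden : (C⁻¹ j j + β j * β j / σε ^ 2) * (σε ^ 2)⁻¹ - (-β j / σε ^ 2) ^ 2
      = C⁻¹ j j / σε ^ 2 := by field_simp; ring
  rw [hden]
  generalize C⁻¹ j j = d at hd0 ⊢
  field_simp
  ring
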